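/- The function F₃ : ℝ³ → ℝ defined by F₃(s,λ,r) = (1/2048)·cos(8s)·e^{8λ} + (3/128)·cosh(4s)·e^{−8λ} − (1/32)·(s·sinh(4s) − 4λ·cosh(4s) + 12r·sinh(4s))·e^{−8λ} − (49/2048 − λ/4 + (3/64)·(16r − s)² + λ²)·e^{8λ} satisfies the partial differential equation ∂³F₃/∂s³ + 5·∂²F₃/∂s∂λ + 4·∂F₃/∂r + 24·∂F₃/∂s = 0 at every point of ℝ³. -/

import Mathlib

/-- The generating function of the genus-3 Donaldson invariants of Σ₃ × ℙ¹:
    F₃(s,λ,r) = (1/2048)·cos(8s)·e^{8λ} + (3/128)·cosh(4s)·e^{−8λ}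
      − (1/32)·(s·sinh(4s) − 4λ·cosh(4s) + 12r·sinh(4s))·e^{−8λ}
      − (49/2048 − λ/4 + (3/64)·(16r − s)² + λ²)·e^{8λ}. -/
noncomputable def F₃ (s l r : ℝ) : ℝ :=
  (1 / 2048) * Real.cos (8 * s) * Real.exp (8 * l)
    + (3 / 128) * Real.cosh (4 * s) * Real.exp (-8 * l)
    - (1 / 32) * (s * Real.sinh (4 * s) - 4 * l * Real.cosh (4 * s)
        + 12 * r * Real.sinh (4 * s)) * Real.exp (-8 * l)
    - (49 / 2048 - l / 4 + (3 / 64) * (16 * r - s) ^ 2 + l ^ 2) * Real.exp (8 * l)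

open Real

/-- ∂F₃/∂s. -/
noncomputable def D1 (s l r : ℝ) : ℝ :=
  -(1/256) * sin (8*s) * exp (8*l) + (3/32) * sinh (4*s) * exp (-8*l)
    - (1/32) * (sinh (4*s) + 4*s*cosh (4*s) - 16*l*sinh (4*s)
        + 48*r*cosh (4*s)) * exp (-8*l)
    + (3/32) * (16*r - s) * exp (8*l)

/-- ∂²F₃/∂s². -/
noncomputable def D2 (s l r : ℝ) : ℝ :=
  -(1/32) * cos (8*s) * exp (8*l) + (3/8) * cosh (4*s) * exp (-8*l)
    - (1/32) * (8*cosh (4*s) + 16*s*sinh (4*s) - 64*l*cosh (4*s)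
        + 192*r*sinh (4*s)) * exp (-8*l)
    - (3/32) * exp (8*l)

/-- ∂³F₃/∂s³. -/
noncomputable def D3 (s l r : ℝ) : ℝ :=
  (1/4) * sin (8*s) * exp (8*l) + (3/2) * sinh (4*s) * exp (-8*l)
    - (1/32) * (48*sinh (4*s) + 64*s*cosh (4*s) - 256*l*sinh (4*s)
        + 768*r*cosh (4*s)) * exp (-8*l)

/-- ∂F₃/∂λ. -/
noncomputable def Dl (s l r : ℝ) : ℝ :=
  (1/256) * cos (8*s) * exp (8*l) - (3/16) * cosh (4*s) * exp (-8*l)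
    + (1/8) * cosh (4*s) * exp (-8*l)
    + (1/4) * (s * sinh (4*s) - 4*l*cosh (4*s) + 12*r*sinh (4*s)) * exp (-8*l)
    - (-(1/4) + 2*l) * exp (8*l)
    - 8 * (49/2048 - l/4 + (3/64)*(16*r - s)^2 + l^2) * exp (8*l)

/-- ∂²F₃/∂s∂λ. -/
noncomputable def Dsl (s l r : ℝ) : ℝ :=
  -(1/32) * sin (8*s) * exp (8*l) - (3/4) * sinh (4*s) * exp (-8*l)
    + (1/2) * sinh (4*s) * exp (-8*l)
    + (1/4) * (sinh (4*s) + 4*s*cosh (4*s) - 16*l*sinh (4*s)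
        + 48*r*cosh (4*s)) * exp (-8*l)
    + (3/4) * (16*r - s) * exp (8*l)

/-- ∂F₃/∂r. -/
noncomputable def Dr (s l r : ℝ) : ℝ :=
  -(3/8) * sinh (4*s) * exp (-8*l) - (3/2) * (16*r - s) * exp (8*l)

lemma hmul8 (x : ℝ) : HasDerivAt (fun y : ℝ => 8*y) 8 x := by
  simpa using (hasDerivAt_id x).const_mul (8:ℝ)

lemma hmul4 (x : ℝ) : HasDerivAt (fun y : ℝ => 4*y) 4 x := by
  simpa using (hasDerivAt_id x).const_mul (4:ℝ)

lemma hasDerivAt_s (l r s : ℝ) :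
    HasDerivAt (fun s' => F₃ s' l r) (D1 s l r) s := by
  have h8 := hmul8 s
  have h4 := hmul4 s
  have t1 := (h8.cos.const_mul (1/2048 : ℝ)).mul_const (Real.exp (8*l))
  have t2 := (h4.cosh.const_mul (3/128 : ℝ)).mul_const (Real.exp (-8*l))
  have hin := (((hasDerivAt_id s).mul h4.sinh).sub (h4.cosh.const_mul (4*l))).add
    (h4.sinh.const_mul (12*r))
  have t3 := (hin.const_mul (1/32 : ℝ)).mul_const (Real.exp (-8*l))
  have hq := (hasDerivAt_const s (16*r)).sub (hasDerivAt_id s)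
  have hin2 := ((hq.pow 2).const_mul ((3/64 : ℝ))).const_add (49/2048 - l/4)
  have hin3 := hin2.add_const (l^2)
  have t4 := hin3.mul_const (Real.exp (8*l))
  exact (((t1.add t2).sub t3).sub t4).congr_deriv (by simp only [D1, id_eq, Pi.sub_apply, Pi.add_apply, Pi.mul_apply, Pi.pow_apply]; push_cast; ring)

lemma hasDerivAt_ss (l r s : ℝ) :
    HasDerivAt (fun s' => D1 s' l r) (D2 s l r) s := by
  have h8 := hmul8 s
  have h4 := hmul4 s
  have t1 := (h8.sin.const_mul (-(1/256) : ℝ)).mul_const (Real.exp (8*l))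
  have t2 := (h4.sinh.const_mul (3/32 : ℝ)).mul_const (Real.exp (-8*l))
  have hin := ((h4.sinh.add (((hasDerivAt_id s).const_mul 4).mul h4.cosh)).sub
      (h4.sinh.const_mul (16*l))).add (h4.cosh.const_mul (48*r))
  have t3 := (hin.const_mul (1/32 : ℝ)).mul_const (Real.exp (-8*l))
  have t4 := ((((hasDerivAt_const s (16*r)).sub (hasDerivAt_id s)).const_mul
      (3/32 : ℝ)).mul_const (Real.exp (8*l)))
  exact (((t1.add t2).sub t3).add t4).congr_deriv (by simp only [D2, id_eq]; push_cast; ring)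

lemma hasDerivAt_sss (l r s : ℝ) :
    HasDerivAt (fun s' => D2 s' l r) (D3 s l r) s := by
  have h8 := hmul8 s
  have h4 := hmul4 s
  have t1 := (h8.cos.const_mul (-(1/32) : ℝ)).mul_const (Real.exp (8*l))
  have t2 := (h4.cosh.const_mul (3/8 : ℝ)).mul_const (Real.exp (-8*l))
  have hin := (((h4.cosh.const_mul (8:ℝ)).add (((hasDerivAt_id s).const_mul 16).mul
      h4.sinh)).sub (h4.cosh.const_mul (64*l))).add (h4.sinh.const_mul (192*r))
  have t3 := (hin.const_mul (1/32 : ℝ)).mul_const (Real.exp (-8*l))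
  have t4 := hasDerivAt_const s ((3/32) * Real.exp (8*l))
  exact (((t1.add t2).sub t3).sub t4).congr_deriv (by simp only [D3, id_eq]; push_cast; ring)

lemma hasDerivAt_l (s r l : ℝ) :
    HasDerivAt (fun l' => F₃ s l' r) (Dl s l r) l := by
  have h8 := hmul8 l
  have hm8 : HasDerivAt (fun y : ℝ => -8*y) (-8) l := by
    simpa using (hasDerivAt_id l).const_mul (-8:ℝ)
  have t1 := h8.exp.const_mul ((1/2048) * Real.cos (8*s))
  have t2 := hm8.exp.const_mul ((3/128) * Real.cosh (4*s))
  have hin := ((hasDerivAt_const l (s * Real.sinh (4*s))).sub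
      (((hasDerivAt_id l).const_mul 4).mul_const (Real.cosh (4*s)))).add
      (hasDerivAt_const l (12*r*Real.sinh (4*s)))
  have t3 := (hin.const_mul (1/32 : ℝ)).mul hm8.exp
  have hin2 := (((hasDerivAt_const l (49/2048 : ℝ)).sub
      ((hasDerivAt_id l).div_const 4)).add
      (hasDerivAt_const l ((3/64)*(16*r - s)^2))).add ((hasDerivAt_id l).pow 2)
  have t4 := hin2.mul h8.exp
  exact (((t1.add t2).sub t3).sub t4).congr_deriv (by simp only [Dl, id_eq, Pi.sub_apply, Pi.add_apply, Pi.mul_apply, Pi.pow_apply]; push_cast; ring)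

lemma hasDerivAt_sl (l r s : ℝ) :
    HasDerivAt (fun s' => Dl s' l r) (Dsl s l r) s := by
  have h8 := hmul8 s
  have h4 := hmul4 s
  have t1 := (h8.cos.const_mul (1/256 : ℝ)).mul_const (Real.exp (8*l))
  have t2 := (h4.cosh.const_mul (3/16 : ℝ)).mul_const (Real.exp (-8*l))
  have t2' := (h4.cosh.const_mul (1/8 : ℝ)).mul_const (Real.exp (-8*l))
  have hin := (((hasDerivAt_id s).mul h4.sinh).sub (h4.cosh.const_mul (4*l))).add
    (h4.sinh.const_mul (12*r))
  have t3 := (hin.const_mul (1/4 : ℝ)).mul_const (Real.exp (-8*l))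
  have t4 := hasDerivAt_const s ((-(1/4) + 2*l) * Real.exp (8*l))
  have hq := (hasDerivAt_const s (16*r)).sub (hasDerivAt_id s)
  have hin2 := (((hq.pow 2).const_mul ((3/64 : ℝ))).const_add
      (49/2048 - l/4)).add_const (l^2)
  have t5 := (hin2.const_mul (8:ℝ)).mul_const (Real.exp (8*l))
  exact (((((t1.sub t2).add t2').add t3).sub t4).sub t5).congr_deriv
    (by simp only [Dsl, id_eq, Pi.sub_apply, Pi.add_apply, Pi.mul_apply, Pi.pow_apply]; push_cast; ring)

lemma hasDerivAt_r (s l r : ℝ) :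
    HasDerivAt (fun r' => F₃ s l r') (Dr s l r) r := by
  have t1 := (hasDerivAt_const r ((1/2048) * Real.cos (8*s) * Real.exp (8*l))).add
    (hasDerivAt_const r ((3/128) * Real.cosh (4*s) * Real.exp (-8*l)))
  have hin := ((hasDerivAt_const r (s * Real.sinh (4*s))).sub
      (hasDerivAt_const r (4*l*Real.cosh (4*s)))).add
      (((hasDerivAt_id r).const_mul 12).mul_const (Real.sinh (4*s)))
  have t3 := (hin.const_mul (1/32 : ℝ)).mul_const (Real.exp (-8*l))
  have hq := (((hasDerivAt_id r).const_mul 16).sub_const s)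
  have hin2 := (((hq.pow 2).const_mul ((3/64 : ℝ))).const_add
      (49/2048 - l/4)).add_const (l^2)
  have t4 := hin2.mul_const (Real.exp (8*l))
  exact ((t1.sub t3).sub t4).congr_deriv (by simp only [Dr, id_eq]; push_cast; ring)

/-- F₃ satisfies ∂³F₃/∂s³ + 5·∂²F₃/∂s∂λ + 4·∂F₃/∂r + 24·∂F₃/∂s = 0 everywhere
    (the relation α³ + 5αβ + 4γ + 24α). -/
theorem F₃_pde_first_relation (s l r : ℝ) :
    iteratedDeriv 3 (fun s' => F₃ s' l r) s
      + 5 * deriv (fun s' => deriv (fun l' => F₃ s' l' r) l) s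
      + 4 * deriv (fun r' => F₃ s l r') r
      + 24 * deriv (fun s' => F₃ s' l r) s = 0 := by
  have e1 : deriv (fun s' => F₃ s' l r) = fun s' => D1 s' l r :=
    funext fun s' => (hasDerivAt_s l r s').deriv
  have e2 : deriv (fun s' => D1 s' l r) = fun s' => D2 s' l r :=
    funext fun s' => (hasDerivAt_ss l r s').deriv
  have e3 : iteratedDeriv 3 (fun s' => F₃ s' l r) s = D3 s l r := by
    rw [show (3 : ℕ) = 2 + 1 from rfl, iteratedDeriv_succ,
      show (2 : ℕ) = 1 + 1 from rfl, iteratedDeriv_succ, iteratedDeriv_one, e1, e2]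
    exact (hasDerivAt_sss l r s).deriv
  have el : (fun s' => deriv (fun l' => F₃ s' l' r) l) = fun s' => Dl s' l r :=
    funext fun s' => (hasDerivAt_l s' r l).deriv
  have esl : deriv (fun s' => deriv (fun l' => F₃ s' l' r) l) s = Dsl s l r := by
    rw [el]; exact (hasDerivAt_sl l r s).deriv
  have er : deriv (fun r' => F₃ s l r') r = Dr s l r := (hasDerivAt_r s l r).deriv
  rw [e3, esl, er, e1]
  simp only [D1, D3, Dsl, Dr]
  ring
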